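/- Let n ≤ m be natural numbers and let S ⊂ ℝ^m be an H^n-measurable set with H^n(S) < ∞. Then the collection of n-dimensional affine subspaces T of ℝ^m (i.e. translates T = x + V of n-dimensional linear subspaces V ⊂ ℝ^m) satisfying H^n(T ∩ S) > 0 is countable. -/

import Mathlib

open MeasureTheory Metric Set Filter Topology ENNReal

noncomputable section

abbrev Euc (n : ℕ) : Type := EuclideanSpace ℝ (Fin n)

lemma meas_translate_submodule_zero {m n : ℕ} (W : Submodule ℝ (Euc m))
    (h : Module.finrank ℝ W < n) (p : Euc m) :
    μH[n] ((fun v => p + v) '' (W : Set (Euc m))) = 0 := by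
  have h1 : μH[(n : ℝ)] ((fun v => p + v) '' (W : Set (Euc m)))
      = μH[(n : ℝ)] (W : Set (Euc m)) :=
    (IsometryEquiv.addLeft p).isometry.hausdorffMeasure_image
      (Or.inl (Nat.cast_nonneg n)) _
  rw [h1]
  have h2 : (W : Set (Euc m)) = ((↑) : W → Euc m) '' univ := by
    simp [Set.image_univ, Subtype.range_coe]
  rw [h2, isometry_subtype_coe.hausdorffMeasure_image (Or.inl (Nat.cast_nonneg n))]
  have h3 : (μH[(n : ℝ)] : Measure W) = 0 :=
    Real.hausdorffMeasure_of_finrank_lt (by exact_mod_cast h)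
  simp [h3]

lemma coset_rebase {E : Type*} [AddCommGroup E] [Module ℝ E] (x p : E)
    (V : Submodule ℝ E) (hp : p ∈ (fun v => x + v) '' (V : Set E)) :
    (fun v => x + v) '' (V : Set E) = (fun v => p + v) '' (V : Set E) := by
  obtain ⟨v0, hv0, rfl⟩ := hp
  ext y
  simp only [Set.mem_image, SetLike.mem_coe]
  constructor
  · rintro ⟨v, hv, rfl⟩
    exact ⟨v - v0, V.sub_mem hv hv0, by abel⟩
  · rintro ⟨v, hv, rfl⟩
    exact ⟨v0 + v, V.add_mem hv0 hv, by abel⟩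

/-- Let `n ≤ m` and let `S ⊆ ℝ^m` be `H^n`-measurable with `H^n(S) < ∞`.
The collection of `n`-dimensional affine subspaces `T` of `ℝ^m` with `H^n(T ∩ S) > 0` is
countable. -/
theorem stmt12 (n m : ℕ) (hnm : n ≤ m)
    (S : Set (Euc m)) (hS : NullMeasurableSet S μH[n]) (hfin : μH[n] S < ⊤) :
    {T : Set (Euc m) |
        (∃ (x : Euc m) (V : Submodule ℝ (Euc m)), Module.finrank ℝ V = n ∧
          T = (fun v => x + v) '' (V : Set (Euc m))) ∧
        0 < μH[n] (T ∩ S)}.Countable := by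
  set P : Set (Euc m) → Prop := fun T => ∃ (x : Euc m) (V : Submodule ℝ (Euc m)),
    Module.finrank ℝ V = n ∧ T = (fun v => x + v) '' (V : Set (Euc m)) with hP
  -- distinct n-dimensional affine subspaces intersect in a null set
  have key : ∀ T₁ T₂ : Set (Euc m), P T₁ → P T₂ → T₁ ≠ T₂ → μH[n] (T₁ ∩ T₂) = 0 := by
    rintro T₁ T₂ ⟨x₁, V₁, hV₁, rfl⟩ ⟨x₂, V₂, hV₂, rfl⟩ hne
    rcases Set.eq_empty_or_nonempty
        ((fun v => x₁ + v) '' (V₁ : Set (Euc m)) ∩ (fun v => x₂ + v) '' (V₂ : Set (Euc m))) with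
      hemp | ⟨p, hp₁, hp₂⟩
    · rw [hemp]; simp
    · rw [coset_rebase x₁ p V₁ hp₁, coset_rebase x₂ p V₂ hp₂] at hne ⊢
      rw [← Set.image_inter (add_right_injective p), ← Submodule.coe_inf]
      have hVne : V₁ ≠ V₂ := by
        rintro rfl; exact hne rfl
      have hlt : V₁ ⊓ V₂ < V₁ := by
        refine lt_of_le_of_ne inf_le_left fun hEq => hVne ?_
        have hle : V₁ ≤ V₂ := by
          rw [← hEq]; exact inf_le_right
        exact Submodule.eq_of_le_of_finrank_le hle (by rw [hV₁, hV₂])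
      have hfr : Module.finrank ℝ (V₁ ⊓ V₂ : Submodule ℝ (Euc m)) < n := by
        calc Module.finrank ℝ (V₁ ⊓ V₂ : Submodule ℝ (Euc m))
            < Module.finrank ℝ V₁ := Submodule.finrank_lt_finrank_of_lt hlt
          _ = n := hV₁
      exact meas_translate_submodule_zero _ hfr p
  have hmeas : ∀ T : Set (Euc m), P T → MeasurableSet T := by
    rintro T ⟨x, V, -, rfl⟩
    have hcl : IsClosed ((fun v => x + v) '' (V : Set (Euc m))) :=
      (Homeomorph.addLeft x).isClosedMap _ V.closed_of_finiteDimensional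
    exact hcl.measurableSet
  have hcnt : Set.Countable
      {i : {T : Set (Euc m) // P T} | 0 < μH[n] (i.1 ∩ S)} := by
    apply Measure.countable_meas_pos_of_disjoint_of_meas_iUnion_ne_top₀
      (μ := μH[n]) (As := fun i : {T : Set (Euc m) // P T} => i.1 ∩ S)
    · exact fun i => ((hmeas i.1 i.2).nullMeasurableSet).inter hS
    · intro i j hij
      have hsub : (i.1 ∩ S) ∩ (j.1 ∩ S) ⊆ i.1 ∩ j.1 := by
        rintro y ⟨⟨h₁, -⟩, ⟨h₂, -⟩⟩; exact ⟨h₁, h₂⟩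
      exact measure_mono_null hsub (key i.1 j.1 i.2 j.2 fun h => hij (Subtype.ext h))
    · refine ne_top_of_le_ne_top hfin.ne (measure_mono ?_)
      exact Set.iUnion_subset fun i => Set.inter_subset_right
  have heq : {T : Set (Euc m) | P T ∧ 0 < μH[n] (T ∩ S)}
      = Subtype.val '' {i : {T : Set (Euc m) // P T} | 0 < μH[n] (i.1 ∩ S)} := by
    ext T
    constructor
    · rintro ⟨hPT, hpos⟩; exact ⟨⟨T, hPT⟩, hpos, rfl⟩
    · rintro ⟨⟨T, hPT⟩, hpos, rfl⟩; exact ⟨hPT, hpos⟩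
  exact heq ▸ hcnt.image Subtype.val
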